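/- Let k ≥ 2, let M be a simple matroid of rank k+1, and let (X₂,…,X_k) be an optimal k-stratification of M. Let i ∈ {2,…,k−1}. If X_i is a rank-i flat of M and |X_{i−1}| + 1 < |X_i|/k, then (X_{i+1}∖X_i, …, X_k∖X_i) is an optimal (k+1−i)-stratification of the matroid (M ÷ X_i) \ X_i obtained from the complete principal truncation of X_i by deleting X_i. -/

import Mathlib

open Set
open scoped Classical
open scoped Matroid
open scoped Matroid

namespace MatroidPaper

variable {α : Type*}

/-- The rank of a set in a matroid: the supremum of cardinalities of independent subsets. -/
noncomputable def rkS (M : Matroid α) (X : Set α) : ℕ :=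
  sSup {n | ∃ I, M.Indep I ∧ I ⊆ X ∧ I.ncard = n}

/-- The rank of a matroid. -/
noncomputable def rk (M : Matroid α) : ℕ := rkS M M.E

/-- A hyperplane: a flat of rank `rk M - 1`. -/
def Hyp (M : Matroid α) (H : Set α) : Prop := M.IsFlat H ∧ rkS M H = rk M - 1

/-- Two sets are skew if the rank of their union is the sum of their ranks. -/
def SkewSets (M : Matroid α) (X Y : Set α) : Prop :=
  rkS M (X ∪ Y) = rkS M X + rkS M Y

/-- A simple matroid: every subset of the ground set with at most two elements is independent. -/
def SimpleM (M : Matroid α) : Prop := ∀ X ⊆ M.E, X.ncard ≤ 2 → M.Indep X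

/-- A real-representable matroid. -/
def RealRep (M : Matroid α) : Prop :=
  ∃ (n : ℕ) (φ : α → (Fin n → ℝ)), ∀ I, I ⊆ M.E →
    (M.Indep I ↔ LinearIndependent ℝ (fun x : I => φ x))

/-- A matroid is `k`-degenerate if it has rank at most one or its ground set is covered by
flats of rank at least two with `∑ (r(Fᵢ) - 1) ≤ k - 1`. -/
def Degen (M : Matroid α) (k : ℕ) : Prop :=
  rk M ≤ 1 ∨ ∃ (t : ℕ) (F : Fin t → Set α),
    (∀ i, M.IsFlat (F i) ∧ 2 ≤ rkS M (F i)) ∧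
    M.E ⊆ ⋃ i, F i ∧ ∑ i, (rkS M (F i) - 1) ≤ k - 1

/-- A set `X` is `k`-degenerate in `M` if the restriction `M|X` is a `k`-degenerate matroid. -/
def DegenSet (M : Matroid α) (X : Set α) (k : ℕ) : Prop := Degen (M.restrict X) k

/-- `N` is the (one-fold) principal truncation of `F` in `M`. -/
noncomputable def IsPT (M : Matroid α) (F : Set α) (N : Matroid α) : Prop :=
  N.E = M.E ∧ ∀ X ⊆ M.E,
    rkS N X = if F ⊆ M.closure X then rkS M X - 1 else rkS M X

/-- `N` is the complete principal truncation `M ÷ F` of `F` in `M`. -/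
def IsCPT (M : Matroid α) (F : Set α) (N : Matroid α) : Prop :=
  N.E = M.E ∧ ∀ X ⊆ M.E,
    rkS N X = min (rkS M X + (rkS M F - 1)) (rkS M (X ∪ F)) - (rkS M F - 1)

section RankTools

variable {M : Matroid α} {I J X Y : Set α}

lemma rkS_eq_ncard (hM : M.E.Finite) (hI : M.IsBasis' I X) : rkS M X = I.ncard := by
  have hIfin : I.Finite := hM.subset hI.indep.subset_ground
  apply le_antisymm
  · have hne : {n | ∃ J, M.Indep J ∧ J ⊆ X ∧ J.ncard = n}.Nonempty :=
      ⟨0, ∅, M.empty_indep, empty_subset _, by simp⟩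
    apply csSup_le hne
    rintro n ⟨J, hJ, hJX, rfl⟩
    have hJfin : J.Finite := hM.subset hJ.subset_ground
    by_contra hlt
    push_neg at hlt
    have hcard : I.encard < J.encard := by
      rw [← hIfin.cast_ncard_eq, ← hJfin.cast_ncard_eq]
      exact_mod_cast hlt
    obtain ⟨x, hxJI, hxind⟩ := hI.indep.augment hJ hcard
    have := hI.2 ⟨hxind, insert_subset (hJX hxJI.1) hI.prop.2⟩ (subset_insert _ _)
    exact hxJI.2 (this (mem_insert _ _))
  · apply le_csSup
    · refine ⟨M.E.ncard, ?_⟩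
      rintro n ⟨J, hJ, hJX, rfl⟩
      exact ncard_le_ncard hJ.subset_ground hM
    · exact ⟨I, hI.indep, hI.prop.2, rfl⟩

lemma exists_basis'_rkS (M : Matroid α) (hM : M.E.Finite) (X : Set α) :
    ∃ I, M.IsBasis' I X ∧ rkS M X = I.ncard := by
  obtain ⟨I, hI⟩ := M.exists_isBasis' X
  exact ⟨I, hI, rkS_eq_ncard hM hI⟩

lemma rkS_indep (hM : M.E.Finite) (hI : M.Indep I) : rkS M I = I.ncard :=
  rkS_eq_ncard hM ⟨⟨hI, subset_rfl⟩, fun _ h hle => h.2⟩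

lemma rkS_mono (hM : M.E.Finite) (hXY : X ⊆ Y) : rkS M X ≤ rkS M Y := by
  obtain ⟨I, hI, hIr⟩ := exists_basis'_rkS M hM X
  obtain ⟨J, hJ, hIJ⟩ := hI.indep.subset_isBasis'_of_subset (hI.prop.2.trans hXY)
  rw [hIr, rkS_eq_ncard hM hJ]
  exact ncard_le_ncard hIJ (hM.subset hJ.indep.subset_ground)

lemma rkS_le_ncard (hM : M.E.Finite) (X : Set α) (hX : X.Finite) : rkS M X ≤ X.ncard := by
  obtain ⟨I, hI, hIr⟩ := exists_basis'_rkS M hM X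
  rw [hIr]
  exact ncard_le_ncard hI.prop.2 hX

lemma rkS_inter_ground (M : Matroid α) (X : Set α) : rkS M (X ∩ M.E) = rkS M X := by
  unfold rkS
  congr 1
  ext n
  constructor
  · rintro ⟨I, hI, hsub, rfl⟩; exact ⟨I, hI, hsub.trans inter_subset_left, rfl⟩
  · rintro ⟨I, hI, hsub, rfl⟩; exact ⟨I, hI, subset_inter hsub hI.subset_ground, rfl⟩

lemma rkS_closure (hM : M.E.Finite) (X : Set α) (hX : X ⊆ M.E) :
    rkS M (M.closure X) = rkS M X := by
  obtain ⟨I, hI⟩ := M.exists_isBasis X hX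
  rw [rkS_eq_ncard hM hI.isBasis', rkS_eq_ncard hM hI.isBasis_closure_right.isBasis']

lemma rkS_union_le (hM : M.E.Finite) (X Y : Set α) :
    rkS M (X ∪ Y) ≤ rkS M X + rkS M Y := by
  obtain ⟨J, hJ, hJr⟩ := exists_basis'_rkS M hM (X ∪ Y)
  have hJfin : J.Finite := hM.subset hJ.indep.subset_ground
  rw [hJr]
  have h1 : (J ∩ X).ncard + (J \ X).ncard = J.ncard := by
    rw [← ncard_union_eq (disjoint_of_subset_left inter_subset_right disjoint_sdiff_right)
      (hJfin.subset inter_subset_left) (hJfin.subset diff_subset)]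
    congr 1
    rw [inter_union_diff]
  have h2 : (J ∩ X).ncard ≤ rkS M X := by
    rw [← rkS_indep hM (hJ.indep.inter_right X)]
    exact rkS_mono hM inter_subset_right
  have h3 : (J \ X).ncard ≤ rkS M Y := by
    rw [← rkS_indep hM (hJ.indep.diff X)]
    refine rkS_mono hM fun x hx => ?_
    rcases hJ.prop.2 hx.1 with h | h
    · exact absurd h hx.2
    · exact h
  omega

lemma rkS_union_le_ncard (hM : M.E.Finite) (X Y : Set α) (hY : Y.Finite) :
    rkS M (X ∪ Y) ≤ rkS M X + Y.ncard :=
  (rkS_union_le hM X Y).trans (by have := rkS_le_ncard hM Y hY; omega)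

lemma rkS_submod (hM : M.E.Finite) (X Y : Set α) (hX : X ⊆ M.E) (hY : Y ⊆ M.E) :
    rkS M (X ∪ Y) + rkS M (X ∩ Y) ≤ rkS M X + rkS M Y := by
  obtain ⟨I, hI⟩ := M.exists_isBasis (X ∩ Y) (inter_subset_left.trans hX)
  obtain ⟨J, hJ, hIJ⟩ := hI.indep.subset_isBasis_of_subset
    (hI.subset.trans (inter_subset_left.trans subset_union_left)) (union_subset hX hY)
  have hJfin : J.Finite := hM.subset hJ.indep.subset_ground
  have hIeq : J ∩ (X ∩ Y) = I := by
    refine (hI.eq_of_subset_indep (hJ.indep.inter_right _) (subset_inter hIJ hI.subset)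
      inter_subset_right).symm
  have hsum : (J ∩ X).ncard + (J ∩ Y).ncard = J.ncard + I.ncard := by
    have := ncard_union_add_ncard_inter (J ∩ X) (J ∩ Y) (hJfin.subset inter_subset_left)
      (hJfin.subset inter_subset_left)
    rw [← inter_inter_distrib_left, hIeq, ← inter_union_distrib_left] at this
    rw [inter_eq_self_of_subset_left hJ.subset] at this
    omega
  have h2 : (J ∩ X).ncard ≤ rkS M X := by
    rw [← rkS_indep hM (hJ.indep.inter_right X)]; exact rkS_mono hM inter_subset_right
  have h3 : (J ∩ Y).ncard ≤ rkS M Y := by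
    rw [← rkS_indep hM (hJ.indep.inter_right Y)]; exact rkS_mono hM inter_subset_right
  rw [rkS_eq_ncard hM hJ.isBasis', rkS_eq_ncard hM hI.isBasis']
  omega


lemma flat_closure (M : Matroid α) (X : Set α) : M.IsFlat (M.closure X) := by
  rw [Matroid.closure_def]
  have hne : {F | M.IsFlat F ∧ X ∩ M.E ⊆ F}.Nonempty :=
    ⟨M.E, M.ground_isFlat, inter_subset_right⟩
  rw [sInter_eq_iInter]
  have : Nonempty {F // F ∈ {F | M.IsFlat F ∧ X ∩ M.E ⊆ F}} := hne.to_subtype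
  exact Matroid.IsFlat.iInter (fun F => F.2.1)

lemma rkS_insert_le (hM : M.E.Finite) (x : α) (X : Set α) :
    rkS M (insert x X) ≤ rkS M X + 1 := by
  have := rkS_union_le_ncard hM X {x} (finite_singleton x)
  simpa [union_singleton, union_comm] using this

lemma rkS_insert_of_notMem_closure (hM : M.E.Finite) {x : α} (hx : x ∈ M.E)
    (hX : X ⊆ M.E) (hxc : x ∉ M.closure X) : rkS M (insert x X) = rkS M X + 1 := by
  obtain ⟨I, hI⟩ := M.exists_isBasis X hX
  have hxI : x ∉ M.closure I := by rwa [hI.closure_eq_closure]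
  have hxnotI : x ∉ I := fun h => hxI (M.subset_closure I hI.indep.subset_ground h)
  have hind : M.Indep (insert x I) := by
    rw [hI.indep.insert_indep_iff_of_notMem hxnotI]
    exact ⟨hx, hxI⟩
  have hbas : M.IsBasis (insert x I) (insert x X) := by
    rw [Matroid.isBasis_iff_indep_closure]
    refine ⟨hind, ?_, insert_subset_insert hI.subset⟩
    refine insert_subset (M.subset_closure _ hind.subset_ground (mem_insert _ _)) ?_
    exact (hI.subset_closure).trans (M.closure_subset_closure (subset_insert _ _))
  rw [rkS_eq_ncard hM hbas.isBasis', rkS_eq_ncard hM hI.isBasis',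
    ncard_insert_of_notMem hxnotI (hM.subset hI.indep.subset_ground)]

lemma subset_closure_of_rkS_le (hM : M.E.Finite) {A : Set α} (hAX : A ⊆ X) (hX : X ⊆ M.E)
    (hr : rkS M X ≤ rkS M A) : X ⊆ M.closure A := by
  intro g hg
  by_contra hgc
  have h1 : rkS M (insert g A) = rkS M A + 1 :=
    rkS_insert_of_notMem_closure hM (hX hg) (hAX.trans hX) hgc
  have h2 : rkS M (insert g A) ≤ rkS M X := rkS_mono hM (insert_subset hg hAX)
  omega

lemma rkS_restrict (M : Matroid α) (R A : Set α) : rkS (M ↾ R) A = rkS M (A ∩ R) := by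
  unfold rkS
  congr 1
  ext n
  constructor
  · rintro ⟨I, hI, hsub, rfl⟩
    rw [Matroid.restrict_indep_iff] at hI
    exact ⟨I, hI.1, subset_inter hsub hI.2, rfl⟩
  · rintro ⟨I, hI, hsub, rfl⟩
    exact ⟨I, Matroid.restrict_indep_iff.mpr ⟨hI, hsub.trans inter_subset_right⟩,
      hsub.trans inter_subset_left, rfl⟩

lemma rkS_restrict' (M : Matroid α) {R A : Set α} (hAR : A ⊆ R) :
    rkS (M ↾ R) A = rkS M A := by
  rw [rkS_restrict, inter_eq_self_of_subset_left hAR]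

lemma flat_restrict_inter {R F₀ : Set α} (hR : R ⊆ M.E) (hF : M.IsFlat F₀) :
    (M ↾ R).IsFlat (F₀ ∩ R) := by
  constructor
  · intro I Z hIF hIZ
    rw [Matroid.isBasis_restrict_iff hR] at hIF hIZ
    have h1 : Z ⊆ M.closure I := hIZ.1.subset_closure
    have h2 : M.closure I ⊆ F₀ := by
      have := M.closure_subset_closure (hIF.1.subset.trans inter_subset_left)
      rwa [hF.closure] at this
    exact subset_inter (h1.trans h2) hIZ.2
  · exact inter_subset_right

lemma closure_inter_subset_flat_restrict {R F : Set α} (hR : R ⊆ M.E)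
    (hF : (M ↾ R).IsFlat F) : M.closure F ∩ R ⊆ F := by
  rintro e ⟨hec, heR⟩
  by_contra heF
  have hFR : F ⊆ R := hF.subset_ground
  obtain ⟨I, hI⟩ := (M ↾ R).exists_isBasis F hFR
  have hIM : M.IsBasis I F := ((Matroid.isBasis_restrict_iff hR).mp hI).1
  have hecl : e ∈ M.closure I := by rwa [hIM.closure_eq_closure]
  have hbas2 : M.IsBasis I (insert e F) := by
    rw [Matroid.isBasis_iff_indep_closure]
    exact ⟨hIM.indep, insert_subset hecl hIM.subset_closure,
      hIM.subset.trans (subset_insert _ _)⟩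
  have hbas2' : (M ↾ R).IsBasis I (insert e F) := by
    rw [Matroid.isBasis_restrict_iff hR]
    exact ⟨hbas2, insert_subset heR hFR⟩
  have := hF.subset_of_isBasis_of_isBasis hI hbas2'
  exact heF (this (mem_insert _ _))

lemma sum_image_le_nat {β : Type*} (s : Finset β) (g : β → Set α) (f : Set α → ℕ) :
    ∑ A ∈ s.image g, f A ≤ ∑ c ∈ s, f (g c) := by
  classical
  induction s using Finset.induction_on with
  | empty => simp
  | insert a s' hnotmem ih =>
    rw [Finset.image_insert, Finset.sum_insert hnotmem]
    by_cases hmem : g a ∈ s'.image g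
    · rw [Finset.insert_eq_self.mpr hmem]
      omega
    · rw [Finset.sum_insert hmem]
      omega

lemma sum_insert_le_nat (s : Finset (Set α)) (a : Set α) (f : Set α → ℕ) :
    ∑ A ∈ insert a s, f A ≤ f a + ∑ A ∈ s, f A := by
  classical
  by_cases hmem : a ∈ s
  · rw [Finset.insert_eq_self.mpr hmem]; omega
  · rw [Finset.sum_insert hmem]

end RankTools

section DegenTools

lemma degen_of_finset {P : Matroid α} {k : ℕ} (G : Finset (Set α))
    (hfl : ∀ A ∈ G, P.IsFlat A ∧ 2 ≤ rkS P A) (hcov : P.E ⊆ ⋃ A ∈ G, A)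
    (hsum : ∑ A ∈ G, (rkS P A - 1) ≤ k - 1) : Degen P k := by
  classical
  right
  refine ⟨Fintype.card {A // A ∈ G},
    fun c => ((Fintype.equivFin {A // A ∈ G}).symm c : Set α), ?_, ?_, ?_⟩
  · intro c
    exact hfl _ ((Fintype.equivFin {A // A ∈ G}).symm c).2
  · intro x hx
    obtain ⟨A, hAG, hxA⟩ := mem_iUnion₂.mp (hcov hx)
    refine mem_iUnion.mpr ⟨Fintype.equivFin {A // A ∈ G} ⟨A, hAG⟩, ?_⟩
    simpa using hxA
  · calc ∑ c, (rkS P ((Fintype.equivFin {A // A ∈ G}).symm c : Set α) - 1)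
        = ∑ a : {A // A ∈ G}, (rkS P (a : Set α) - 1) :=
          Fintype.sum_equiv (Fintype.equivFin {A // A ∈ G}).symm _ _ (fun _ => rfl)
      _ = ∑ A ∈ G, (rkS P A - 1) := Finset.sum_coe_sort G (fun A => rkS P A - 1)
      _ ≤ k - 1 := hsum

lemma ncard_le_sum_inter {ι : Type*} (u : Finset ι) (g : ι → Set α) :
    ∀ S : Set α, S.Finite → S ⊆ ⋃ c ∈ u, g c → S.ncard ≤ ∑ c ∈ u, (S ∩ g c).ncard := by
  classical
  induction u using Finset.induction_on with
  | empty => intro S _ hsub; simp at hsub; simp [hsub]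
  | insert a u' hnotmem ih =>
    intro S hSfin hsub
    rw [Finset.sum_insert hnotmem]
    have h1 : S ⊆ (S ∩ g a) ∪ (S \ g a) := by
      intro x hx
      by_cases hcase : x ∈ g a
      · exact Or.inl ⟨hx, hcase⟩
      · exact Or.inr ⟨hx, hcase⟩
    have h2 : (S \ g a) ⊆ ⋃ c ∈ u', g c := by
      intro x hx
      obtain ⟨c, hc, hxc⟩ := mem_iUnion₂.mp (hsub hx.1)
      rcases Finset.mem_insert.mp hc with rfl | hc'
      · exact absurd hxc hx.2
      · exact mem_iUnion₂.mpr ⟨c, hc', hxc⟩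
    have h3 := ih (S \ g a) (hSfin.diff) h2
    have h4 : ∑ c ∈ u', ((S \ g a) ∩ g c).ncard ≤ ∑ c ∈ u', (S ∩ g c).ncard :=
      Finset.sum_le_sum fun c _ =>
        ncard_le_ncard (inter_subset_inter_left _ diff_subset) (hSfin.subset inter_subset_left)
    have h5 : S.ncard ≤ (S ∩ g a).ncard + (S \ g a).ncard :=
      (ncard_le_ncard h1 ((hSfin.subset inter_subset_left).union (hSfin.diff))).trans
        (ncard_union_le _ _)
    omega

end DegenTools


/-- Complete principal truncation of the rank-`i` flat `Xᵢ` followed by deleting `Xᵢ` yields an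
optimal `(k+1-i)`-stratification `(X_{i+1} \ Xᵢ, …, X_k \ Xᵢ)`. -/
theorem stmt19 (k : ℕ) (hk : 2 ≤ k) (M : Matroid α) [M.Finite] (hs : SimpleM M)
    (hr : rk M = k + 1) (X : ℕ → Set α)
    (hX1 : X 1 = ∅) (hXtop : X (k + 1) = M.E)
    (hchain : ∀ i, 2 ≤ i → i ≤ k → X i ⊆ X (i + 1))
    (hdeg : ∀ i, 2 ≤ i → i ≤ k → DegenSet M (X i) i)
    (hopt : ∀ i, 2 ≤ i → i ≤ k → ∀ Y ⊆ X (i + 1), DegenSet M Y i →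
      Y.ncard ≤ (X i).ncard)
    (i : ℕ) (hi2 : 2 ≤ i) (hik : i ≤ k - 1)
    (hflat : M.IsFlat (X i)) (hrk : rkS M (X i) = i)
    (hsmall : k * ((X (i - 1)).ncard + 1) < (X i).ncard)
    (N : Matroid α) (hN : IsCPT M (X i) N) :
    ∀ l, i + 1 ≤ l → l ≤ k →
      DegenSet (N.restrict (M.E \ X i)) (X l \ X i) (l - i + 1) ∧
      ∀ Y ⊆ X (l + 1) \ X i, DegenSet (N.restrict (M.E \ X i)) Y (l - i + 1) →
        Y.ncard ≤ (X l \ X i).ncard := by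
  classical
  obtain ⟨hNE0, hNr⟩ := hN
  have hME : M.E.Finite := M.ground_finite
  have hNE : N.E.Finite := by rw [hNE0]; exact hME
  intro l hli hlk
  -- chain monotonicity
  have hsubd : ∀ d a, 2 ≤ a → a + d ≤ k + 1 → X a ⊆ X (a + d) := by
    intro d
    induction d with
    | zero => intro a _ _; exact subset_rfl
    | succ d ih =>
      intro a ha hbk
      have h1 : X a ⊆ X (a + d) := ih a ha (by omega)
      have h2 : X (a + d) ⊆ X (a + d + 1) := hchain (a + d) (by omega) (by omega)
      exact h1.trans h2
  have hsub : ∀ a b, 2 ≤ a → a ≤ b → b ≤ k + 1 → X a ⊆ X b := by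
    intro a b ha hab hbk
    obtain ⟨d, rfl⟩ := Nat.exists_eq_add_of_le hab
    exact hsubd d a ha hbk
  have hXiE : X i ⊆ M.E := by rw [← hXtop]; exact hsub i (k+1) hi2 (by omega) le_rfl
  have hXlE : X l ⊆ M.E := by rw [← hXtop]; exact hsub l (k+1) (by omega) (by omega) le_rfl
  have hXl1E : X (l+1) ⊆ M.E := by
    rw [← hXtop]; exact hsub (l+1) (k+1) (by omega) (by omega) le_rfl
  have hXil : X i ⊆ X l := hsub i l hi2 (by omega) (by omega)
  have hXiXl1 : X i ⊆ X (l+1) := hsub i (l+1) hi2 (by omega) (by omega)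
  have hXifin : (X i).Finite := hME.subset hXiE
  have hXlfin : (X l).Finite := hME.subset hXlE
  have hSdfin : (X l \ X i).Finite := hXlfin.diff
  -- CPT rank formula
  have hrkN : ∀ A, A ⊆ M.E →
      rkS N A = min (rkS M A + (i-1)) (rkS M (A ∪ X i)) - (i-1) := by
    intro A hA
    rw [hNr A hA, hrk]
  have hXiUnion : ∀ A : Set α, i ≤ rkS M (A ∪ X i) := by
    intro A
    have h := rkS_mono hME (subset_union_right : X i ⊆ A ∪ X i)
    rwa [hrk] at h
  have hNleM : ∀ A, A ⊆ M.E → rkS N A ≤ rkS M A := by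
    intro A hA
    rw [hrkN A hA]
    have h1 := min_le_left (rkS M A + (i-1)) (rkS M (A ∪ X i))
    omega
  have hminlow : ∀ A, A ⊆ M.E →
      rkS N A + (i-1) = min (rkS M A + (i-1)) (rkS M (A ∪ X i)) := by
    intro A hA
    have h1 := hXiUnion A
    rw [hrkN A hA]
    have h2 := min_le_left (rkS M A + (i-1)) (rkS M (A ∪ X i))
    have h3 := min_le_right (rkS M A + (i-1)) (rkS M (A ∪ X i))
    omega
  have hdich : ∀ A, A ⊆ M.E →
      rkS M A = rkS N A ∨ rkS M (A ∪ X i) = rkS N A + (i-1) := by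
    intro A hA
    have h1 := hminlow A hA
    rcases min_cases (rkS M A + (i-1)) (rkS M (A ∪ X i)) with ⟨heq, _⟩ | ⟨heq, _⟩
    · left; omega
    · right; omega
  have hpairN : ∀ x y : α, x ∈ M.E → y ∈ M.E → x ∉ X i → x ≠ y → rkS N {x, y} = 2 := by
    intro x y hxE hyE hxXi hxy
    have hxyE : ({x, y} : Set α) ⊆ M.E := by
      intro z hz; rcases hz with rfl | rfl; exacts [hxE, hyE]
    have hind : M.Indep {x, y} := hs _ hxyE (by rw [ncard_pair hxy])
    have hr2 : rkS M {x, y} = 2 := by rw [rkS_indep hME hind, ncard_pair hxy]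
    have hins : rkS M (insert x (X i)) = i + 1 := by
      rw [rkS_insert_of_notMem_closure hME hxE hXiE (by rwa [hflat.closure]), hrk]
    have hmono2 : i + 1 ≤ rkS M ({x, y} ∪ X i) := by
      rw [← hins]
      apply rkS_mono hME
      intro z hz
      rcases hz with rfl | hz
      · exact Or.inl (Or.inl rfl)
      · exact Or.inr hz
    have hmin := hminlow {x, y} hxyE
    rw [hr2] at hmin
    omega
  have hZ2 : ∀ Z : Set α, Z ⊆ M.E \ X i → 2 ≤ Z.ncard → 2 ≤ rkS N Z := by
    intro Z hZ h2
    obtain ⟨x, y, hx, hy, hxy⟩ :=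
      (one_lt_ncard_iff ((hME.diff).subset hZ)).mp (by omega)
    have hpxy : ({x, y} : Set α) ⊆ Z := by
      intro z hz; rcases hz with rfl | rfl; exacts [hx, hy]
    have := hpairN x y (hZ hx).1 (hZ hy).1 (hZ hx).2 hxy
    have hm : rkS N {x, y} ≤ rkS N Z := rkS_mono hNE hpxy
    omega
  constructor
  · -- Part 1
    unfold DegenSet
    have hSdE : X l \ X i ⊆ M.E \ X i := diff_subset_diff_left hXlE
    have hPEfin : ((N ↾ (M.E \ X i)) ↾ (X l \ X i)).E.Finite := hSdfin
    have hrP : ∀ A : Set α, A ⊆ X l \ X i →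
        rkS ((N ↾ (M.E \ X i)) ↾ (X l \ X i)) A = rkS N A := by
      intro A hA
      rw [rkS_restrict' _ hA, rkS_restrict' _ (hA.trans hSdE)]
    have hrPcl : ∀ Z : Set α, Z ⊆ X l \ X i →
        rkS ((N ↾ (M.E \ X i)) ↾ (X l \ X i))
          (((N ↾ (M.E \ X i)) ↾ (X l \ X i)).closure Z) = rkS N Z := by
      intro Z hZ
      rw [rkS_closure hPEfin Z hZ, hrP Z hZ]
    by_cases hS1 : (X l \ X i).ncard ≤ 1
    · left
      unfold rk
      rw [Matroid.restrict_ground_eq, hrP _ subset_rfl]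
      have h1 := rkS_le_ncard hNE (X l \ X i) hSdfin
      omega
    push_neg at hS1
    have hdl := hdeg l (by omega) hlk
    unfold DegenSet at hdl
    rcases hdl with hrk1 | ⟨t, F, hF, hcov, hsum⟩
    · exfalso
      unfold rk at hrk1
      rw [Matroid.restrict_ground_eq, rkS_restrict' _ subset_rfl] at hrk1
      have h1 : rkS M (X i) ≤ rkS M (X l) := rkS_mono hME hXil
      rw [hrk] at h1
      omega
    have hFXl : ∀ c, F c ⊆ X l := fun c => (hF c).1.subset_ground
    have hFE : ∀ c, F c ⊆ M.E := fun c => (hFXl c).trans hXlE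
    have hrF : ∀ c, rkS (M ↾ X l) (F c) = rkS M (F c) := fun c => rkS_restrict' M (hFXl c)
    have hr2 : ∀ c, 2 ≤ rkS M (F c) := fun c => by rw [← hrF c]; exact (hF c).2
    have hsum' : ∑ c, (rkS M (F c) - 1) ≤ l - 1 := by
      have := hsum
      rw [Finset.sum_congr rfl (fun c _ => by rw [hrF c])] at this
      exact this
    have ht : t ≤ l - 1 := by
      have h1 : (Finset.univ : Finset (Fin t)).card ≤ ∑ c, (rkS M (F c) - 1) := by
        rw [Finset.card_eq_sum_ones]
        exact Finset.sum_le_sum fun c _ => by have := hr2 c; omega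
      simp only [Finset.card_univ, Fintype.card_fin] at h1
      omega
    -- pigeonhole
    obtain ⟨j0, hj0⟩ : ∃ j0, (X (i-1)).ncard + 2 ≤ (X i ∩ F j0).ncard := by
      by_contra hno
      push_neg at hno
      have hcovXi : X i ⊆ ⋃ c ∈ (Finset.univ : Finset (Fin t)), F c := by
        intro x hx
        have hx' : x ∈ (M ↾ X l).E := hXil hx
        obtain ⟨c, hc⟩ := mem_iUnion.mp (hcov hx')
        exact mem_iUnion₂.mpr ⟨c, Finset.mem_univ c, hc⟩
      have h1 := ncard_le_sum_inter Finset.univ F (X i) hXifin hcovXi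
      have h2 : ∑ c ∈ Finset.univ, (X i ∩ F c).ncard ≤ t * ((X (i-1)).ncard + 1) := by
        calc ∑ c ∈ Finset.univ, (X i ∩ F c).ncard
            ≤ ∑ _c ∈ (Finset.univ : Finset (Fin t)), ((X (i-1)).ncard + 1) :=
              Finset.sum_le_sum (fun c _ => by have := hno c; omega)
          _ = t * ((X (i-1)).ncard + 1) := by
              rw [Finset.sum_const, Finset.card_univ, Fintype.card_fin, smul_eq_mul]
      have h3 : t * ((X (i-1)).ncard + 1) ≤ k * ((X (i-1)).ncard + 1) :=
        Nat.mul_le_mul_right _ (by omega)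
      omega
    have hA0Xi : X i ∩ F j0 ⊆ X i := inter_subset_left
    have hA0fin : (X i ∩ F j0).Finite := hXifin.subset hA0Xi
    have hrA0 : rkS M (X i ∩ F j0) = i := by
      have hub : rkS M (X i ∩ F j0) ≤ i := by
        have h := rkS_mono hME hA0Xi
        rwa [hrk] at h
      by_contra hne
      rcases Nat.lt_or_ge (rkS M (X i ∩ F j0)) 2 with hsmallr | hbigr
      · obtain ⟨x, y, hxA, hyA, hxy⟩ := (one_lt_ncard_iff hA0fin).mp (by omega)
        have hpairind : M.Indep {x, y} := by
          apply hs
          · intro z hz; rcases hz with rfl | rfl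
            exacts [hXiE (hA0Xi hxA), hXiE (hA0Xi hyA)]
          · rw [ncard_pair hxy]
        have hmp : rkS M {x, y} ≤ rkS M (X i ∩ F j0) := by
          apply rkS_mono hME
          intro z hz; rcases hz with rfl | rfl; exacts [hxA, hyA]
        rw [rkS_indep hME hpairind, ncard_pair hxy] at hmp
        omega
      · have hi3 : 3 ≤ i := by omega
        have hdegA0 : DegenSet M (X i ∩ F j0) (i-1) := by
          unfold DegenSet
          right
          refine ⟨1, fun _ => X i ∩ F j0, fun _ => ⟨?_, ?_⟩, ?_, ?_⟩
          · exact (M ↾ (X i ∩ F j0)).ground_isFlat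
          · rw [rkS_restrict' _ subset_rfl]; exact hbigr
          · intro x hx; exact mem_iUnion.mpr ⟨0, hx⟩
          · rw [Fin.sum_univ_one, rkS_restrict' _ subset_rfl]
            omega
        have := hopt (i-1) (by omega) (by omega) (X i ∩ F j0)
          (by rw [show i - 1 + 1 = i by omega]; exact hA0Xi) hdegA0
        omega
    have hXiF : X i ⊆ F j0 := by
      have hcl : X i ⊆ M.closure (X i ∩ F j0) :=
        subset_closure_of_rkS_le hME hA0Xi hXiE (by rw [hrA0, hrk])
      have h2 : M.closure (X i ∩ F j0) ⊆ M.closure (F j0) :=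
        M.closure_subset_closure inter_subset_right
      have h3 : M.closure (F j0) ∩ X l ⊆ F j0 :=
        closure_inter_subset_flat_restrict hXlE (hF j0).1
      exact fun x hx => h3 ⟨h2 (hcl hx), hXil hx⟩
    have hrj0 : i ≤ rkS M (F j0) := by
      have h := rkS_mono hME hXiF
      rwa [hrk] at h
    have hrNj0 : rkS N (F j0 \ X i) + (i-1) ≤ rkS M (F j0) := by
      have hFE' : F j0 \ X i ⊆ M.E := diff_subset.trans (hFE j0)
      have hmin := hminlow (F j0 \ X i) hFE'
      have hUeq : (F j0 \ X i) ∪ X i = F j0 := by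
        rw [diff_union_self]
        exact union_eq_self_of_subset_right hXiF
      rw [hUeq] at hmin
      have h2 := min_le_right (rkS M (F j0 \ X i) + (i-1)) (rkS M (F j0))
      omega
    set J := Finset.univ.filter (fun c => c ≠ j0 ∧ 2 ≤ (F c \ X i).ncard) with hJdef
    set Sm := Finset.univ.filter
      (fun c => c ≠ j0 ∧ ¬ 2 ≤ (F c \ X i).ncard ∧ (F c \ X i).Nonempty) with hSmdef
    set D := (F j0 \ X i) ∪ ⋃ c ∈ Sm, (F c \ X i) with hDdef
    have hDE : D ⊆ X l \ X i := by
      apply union_subset (diff_subset_diff_left (hFXl j0))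
      intro x hx
      obtain ⟨c, _, hxc⟩ := mem_iUnion₂.mp hx
      exact diff_subset_diff_left (hFXl c) hxc
    have hDfin : D.Finite := hSdfin.subset hDE
    have hJE : ∀ c, F c \ X i ⊆ X l \ X i := fun c => diff_subset_diff_left (hFXl c)
    have hcovD : X l \ X i ⊆ D ∪ ⋃ c ∈ J, (F c \ X i) := by
      intro x hx
      have hx' : x ∈ (M ↾ X l).E := hx.1
      obtain ⟨c, hc⟩ := mem_iUnion.mp (hcov hx')
      have hxc : x ∈ F c \ X i := ⟨hc, hx.2⟩
      by_cases h1 : c = j0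
      · subst h1; exact Or.inl (Or.inl hxc)
      by_cases h2 : 2 ≤ (F c \ X i).ncard
      · exact Or.inr (mem_iUnion₂.mpr
          ⟨c, Finset.mem_filter.mpr ⟨Finset.mem_univ _, h1, h2⟩, hxc⟩)
      · exact Or.inl (Or.inr (mem_iUnion₂.mpr
          ⟨c, Finset.mem_filter.mpr ⟨Finset.mem_univ _, h1, h2, ⟨x, hxc⟩⟩, hxc⟩))
    have hrD : rkS N D + (i-1) ≤ rkS M (F j0) + Sm.card := by
      have hUfin : (⋃ c ∈ Sm, (F c \ X i)).Finite :=
        hSdfin.subset (fun x hx => by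
          obtain ⟨c, _, hxc⟩ := mem_iUnion₂.mp hx; exact hJE c hxc)
      have h1 : rkS N D ≤ rkS N (F j0 \ X i) + (⋃ c ∈ Sm, (F c \ X i)).ncard :=
        rkS_union_le_ncard hNE _ _ hUfin
      have h2 : (⋃ c ∈ Sm, (F c \ X i)).ncard ≤ Sm.card := by
        have h3 := ncard_le_sum_inter Sm (fun c => F c \ X i)
          (⋃ c ∈ Sm, (F c \ X i)) hUfin subset_rfl
        have h4 : ∑ c ∈ Sm, ((⋃ c ∈ Sm, (F c \ X i)) ∩ (F c \ X i)).ncard ≤ Sm.card := by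
          rw [Finset.card_eq_sum_ones]
          apply Finset.sum_le_sum
          intro c hc
          rw [Finset.mem_filter] at hc
          have h5 : ((⋃ c ∈ Sm, (F c \ X i)) ∩ (F c \ X i)).ncard ≤ (F c \ X i).ncard :=
            ncard_le_ncard inter_subset_right (hSdfin.subset (hJE c))
          omega
        omega
      omega
    have hmaster : (rkS M (F j0) - 1) + (∑ c ∈ J, (rkS M (F c) - 1)) + Sm.card ≤ l - 1 := by
      have hdisjJSm : Disjoint J Sm := by
        rw [Finset.disjoint_left]
        intro c hcJ hcSm
        rw [hJdef, Finset.mem_filter] at hcJ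
        rw [hSmdef, Finset.mem_filter] at hcSm
        exact hcSm.2.2.1 hcJ.2.2
      have hj0nm : j0 ∉ J ∪ Sm := by
        intro h
        rcases Finset.mem_union.mp h with h | h
        · rw [hJdef, Finset.mem_filter] at h; exact h.2.1 rfl
        · rw [hSmdef, Finset.mem_filter] at h; exact h.2.1 rfl
      have h1 : ∑ c ∈ insert j0 (J ∪ Sm), (rkS M (F c) - 1) ≤ ∑ c, (rkS M (F c) - 1) :=
        Finset.sum_le_sum_of_subset (Finset.subset_univ _)
      rw [Finset.sum_insert hj0nm, Finset.sum_union hdisjJSm] at h1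
      have h2 : Sm.card ≤ ∑ c ∈ Sm, (rkS M (F c) - 1) := by
        rw [Finset.card_eq_sum_ones]
        exact Finset.sum_le_sum fun c _ => by have := hr2 c; omega
      omega
    have hJpieces : ∀ c ∈ J, ((N ↾ (M.E \ X i)) ↾ (X l \ X i)).IsFlat
          (((N ↾ (M.E \ X i)) ↾ (X l \ X i)).closure (F c \ X i)) ∧
        2 ≤ rkS ((N ↾ (M.E \ X i)) ↾ (X l \ X i))
          (((N ↾ (M.E \ X i)) ↾ (X l \ X i)).closure (F c \ X i)) ∧
        rkS ((N ↾ (M.E \ X i)) ↾ (X l \ X i))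
          (((N ↾ (M.E \ X i)) ↾ (X l \ X i)).closure (F c \ X i)) ≤ rkS M (F c) := by
      intro c hc
      rw [hJdef, Finset.mem_filter] at hc
      have hclZ := hrPcl (F c \ X i) (hJE c)
      refine ⟨flat_closure _ _, ?_, ?_⟩
      · rw [hclZ]
        exact hZ2 _ ((hJE c).trans hSdE) hc.2.2
      · rw [hclZ]
        have h1 : rkS N (F c \ X i) ≤ rkS M (F c \ X i) :=
          hNleM _ (diff_subset.trans (hFE c))
        have h2 : rkS M (F c \ X i) ≤ rkS M (F c) := rkS_mono hME diff_subset
        omega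
    have hJsum : ∑ A ∈ J.image (fun c => ((N ↾ (M.E \ X i)) ↾ (X l \ X i)).closure (F c \ X i)),
        (rkS ((N ↾ (M.E \ X i)) ↾ (X l \ X i)) A - 1) ≤ ∑ c ∈ J, (rkS M (F c) - 1) := by
      refine (sum_image_le_nat J _ _).trans (Finset.sum_le_sum ?_)
      intro c hc
      have := (hJpieces c hc).2.2
      omega
    have hJcover : ∀ x ∈ ⋃ c ∈ J, (F c \ X i), x ∈ ⋃ A ∈ J.image
        (fun c => ((N ↾ (M.E \ X i)) ↾ (X l \ X i)).closure (F c \ X i)), A := by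
      intro x hx
      obtain ⟨c, hc, hxc⟩ := mem_iUnion₂.mp hx
      refine mem_iUnion₂.mpr ⟨_, Finset.mem_image_of_mem _ hc, ?_⟩
      exact ((N ↾ (M.E \ X i)) ↾ (X l \ X i)).subset_closure _ (hJE c) hxc
    rcases Nat.lt_or_ge D.ncard 2 with hDsmall | hDbig
    · rcases Set.eq_empty_or_nonempty D with hDemp | hDne
      · -- D empty : only J pieces
        apply degen_of_finset
          (J.image (fun c => ((N ↾ (M.E \ X i)) ↾ (X l \ X i)).closure (F c \ X i)))
        · intro A hA
          obtain ⟨c, hc, rfl⟩ := Finset.mem_image.mp hA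
          exact ⟨(hJpieces c hc).1, (hJpieces c hc).2.1⟩
        · intro x hx
          have hx' : x ∈ X l \ X i := hx
          rcases hcovD hx' with hxD | hxJ
          · rw [hDemp] at hxD; exact absurd hxD (notMem_empty x)
          · exact hJcover x hxJ
        · have := hJsum
          omega
      · -- D = {x}
        obtain ⟨x, hxD⟩ := hDne
        obtain ⟨a, b, ha, hb, hab⟩ := (one_lt_ncard_iff hSdfin).mp (by omega)
        obtain ⟨y, hy, hyx⟩ : ∃ y ∈ X l \ X i, y ≠ x := by
          by_cases hax : a = x
          · exact ⟨b, hb, by rw [← hax]; exact fun h => hab h.symm⟩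
          · exact ⟨a, ha, hax⟩
        have hxSd : x ∈ X l \ X i := hDE hxD
        have hpairsub : ({x, y} : Set α) ⊆ X l \ X i := by
          intro z hz; rcases hz with rfl | rfl; exacts [hxSd, hy]
        have hDx : D ⊆ {x} := by
          intro z hz
          by_contra hzx
          have h2 : 2 ≤ D.ncard := by
            rw [← ncard_pair (show z ≠ x from fun h => hzx (h ▸ rfl))]
            apply ncard_le_ncard _ hDfin
            intro w hw; rcases hw with rfl | rfl; exacts [hz, hxD]
          omega
        -- budget disjunction
        have hbud : i + 1 ≤ rkS M (F j0) ∨ 1 ≤ Sm.card := by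
          rcases Nat.lt_or_ge (rkS M (F j0)) (i + 1) with hlow | hhigh
          · right
            have hr0 : rkS M (F j0) = i := by omega
            have hFsub : F j0 ⊆ X i := by
              have h1 : F j0 ⊆ M.closure (X i) :=
                subset_closure_of_rkS_le hME hXiF (hFE j0) (by rw [hr0, hrk])
              rwa [hflat.closure] at h1
            have hFdiff : F j0 \ X i = ∅ := by
              rw [diff_eq_empty]; exact hFsub
            have hxU : x ∈ ⋃ c ∈ Sm, (F c \ X i) := by
              rcases hxD with hx1 | hx2
              · rw [hFdiff] at hx1; exact absurd hx1 (notMem_empty x)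
              · exact hx2
            obtain ⟨c, hc, _⟩ := mem_iUnion₂.mp hxU
            exact Finset.card_pos.mpr ⟨c, hc⟩
          · left; exact hhigh
        apply degen_of_finset
          (insert (((N ↾ (M.E \ X i)) ↾ (X l \ X i)).closure {x, y})
            (J.image (fun c => ((N ↾ (M.E \ X i)) ↾ (X l \ X i)).closure (F c \ X i))))
        · intro A hA
          rcases Finset.mem_insert.mp hA with rfl | hA
          · refine ⟨flat_closure _ _, ?_⟩
            rw [hrPcl _ hpairsub]
            exact hZ2 _ (hpairsub.trans hSdE) (by rw [ncard_pair (Ne.symm hyx)])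
          · obtain ⟨c, hc, rfl⟩ := Finset.mem_image.mp hA
            exact ⟨(hJpieces c hc).1, (hJpieces c hc).2.1⟩
        · intro z hz
          have hz' : z ∈ X l \ X i := hz
          rcases hcovD hz' with hzD | hzJ
          · have hzx : z = x := hDx hzD
            refine mem_iUnion₂.mpr ⟨_, Finset.mem_insert_self _ _, ?_⟩
            exact ((N ↾ (M.E \ X i)) ↾ (X l \ X i)).subset_closure _ hpairsub
              (by rw [hzx]; exact Or.inl rfl)
          · obtain ⟨B', hB', hzB⟩ := mem_iUnion₂.mp (hJcover z hzJ)
            exact mem_iUnion₂.mpr ⟨B', Finset.mem_insert_of_mem hB', hzB⟩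
        · have h1 := sum_insert_le_nat
            (J.image (fun c => ((N ↾ (M.E \ X i)) ↾ (X l \ X i)).closure (F c \ X i)))
            (((N ↾ (M.E \ X i)) ↾ (X l \ X i)).closure {x, y})
            (fun A => rkS ((N ↾ (M.E \ X i)) ↾ (X l \ X i)) A - 1)
          have h2 : rkS ((N ↾ (M.E \ X i)) ↾ (X l \ X i))
              (((N ↾ (M.E \ X i)) ↾ (X l \ X i)).closure {x, y}) = 2 := by
            rw [hrPcl _ hpairsub]
            exact hpairN x y (hSdE hxSd).1 (hSdE hy).1 (hSdE hxSd).2 (Ne.symm hyx)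
          have h3 := hJsum
          rcases hbud with hb1 | hb1 <;> omega
    · -- D big
      apply degen_of_finset
        (insert (((N ↾ (M.E \ X i)) ↾ (X l \ X i)).closure D)
          (J.image (fun c => ((N ↾ (M.E \ X i)) ↾ (X l \ X i)).closure (F c \ X i))))
      · intro A hA
        rcases Finset.mem_insert.mp hA with rfl | hA
        · refine ⟨flat_closure _ _, ?_⟩
          rw [hrPcl _ hDE]
          exact hZ2 _ (hDE.trans hSdE) hDbig
        · obtain ⟨c, hc, rfl⟩ := Finset.mem_image.mp hA
          exact ⟨(hJpieces c hc).1, (hJpieces c hc).2.1⟩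
      · intro z hz
        have hz' : z ∈ X l \ X i := hz
        rcases hcovD hz' with hzD | hzJ
        · refine mem_iUnion₂.mpr ⟨_, Finset.mem_insert_self _ _, ?_⟩
          exact ((N ↾ (M.E \ X i)) ↾ (X l \ X i)).subset_closure _ hDE hzD
        · obtain ⟨B', hB', hzB⟩ := mem_iUnion₂.mp (hJcover z hzJ)
          exact mem_iUnion₂.mpr ⟨B', Finset.mem_insert_of_mem hB', hzB⟩
      · have h1 := sum_insert_le_nat
          (J.image (fun c => ((N ↾ (M.E \ X i)) ↾ (X l \ X i)).closure (F c \ X i)))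
          (((N ↾ (M.E \ X i)) ↾ (X l \ X i)).closure D)
          (fun A => rkS ((N ↾ (M.E \ X i)) ↾ (X l \ X i)) A - 1)
        have h2 : rkS ((N ↾ (M.E \ X i)) ↾ (X l \ X i))
            (((N ↾ (M.E \ X i)) ↾ (X l \ X i)).closure D) = rkS N D := hrPcl _ hDE
        have h3 := hJsum
        omega
  · -- Part 2
    intro Y hYsub hYdeg
    have hYE' : Y ⊆ M.E \ X i := hYsub.trans (diff_subset_diff_left hXl1E)
    have hYE : Y ⊆ M.E := hYE'.trans diff_subset
    have hYfin : Y.Finite := hME.subset hYE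
    have hRE : Y ∪ X i ⊆ M.E := union_subset hYE hXiE
    have hXiR : X i ⊆ Y ∪ X i := subset_union_right
    have hstep1 : DegenSet M (Y ∪ X i) l := by
      unfold DegenSet
      unfold DegenSet at hYdeg
      rcases hYdeg with h1 | ⟨t, F, hF, hcov, hsum⟩
      · -- low rank case
        have hrkY : rkS N Y ≤ 1 := by
          unfold rk at h1
          rw [Matroid.restrict_ground_eq, rkS_restrict' _ subset_rfl,
            rkS_restrict' _ hYE'] at h1
          exact h1
        have hrkR : rkS M (Y ∪ X i) ≤ i + 1 := by
          have hmin := hminlow Y hYE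
          have hub : rkS M (Y ∪ X i) ≤ rkS M Y + rkS M (X i) := rkS_union_le hME _ _
          rw [hrk] at hub
          have hlb := hXiUnion Y
          omega
        right
        refine ⟨1, fun _ => Y ∪ X i, fun _ => ⟨?_, ?_⟩, ?_, ?_⟩
        · exact (M ↾ (Y ∪ X i)).ground_isFlat
        · rw [rkS_restrict' _ subset_rfl]
          have h2 := rkS_mono hME hXiR
          rw [hrk] at h2
          omega
        · intro x hx; exact mem_iUnion.mpr ⟨0, hx⟩
        · rw [Fin.sum_univ_one, rkS_restrict' _ subset_rfl]
          omega
      · -- cover case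
        have hFY : ∀ c, F c ⊆ Y := fun c => (hF c).1.subset_ground
        have hFE2 : ∀ c, F c ⊆ M.E := fun c => (hFY c).trans hYE
        have hrQ : ∀ c, rkS ((N ↾ (M.E \ X i)) ↾ Y) (F c) = rkS N (F c) := fun c => by
          rw [rkS_restrict' _ (hFY c), rkS_restrict' _ ((hFY c).trans hYE')]
        have hr2 : ∀ c, 2 ≤ rkS N (F c) := fun c => by
          rw [← hrQ c]; exact (hF c).2
        set ns := Finset.univ.filter (fun c => ¬ rkS M (F c) = rkS N (F c)) with hnsdef
        set sk := Finset.univ.filter (fun c => rkS M (F c) = rkS N (F c)) with hskdef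
        have hnsprop : ∀ c ∈ ns, rkS M (F c ∪ X i) = rkS N (F c) + (i-1) := by
          intro c hc
          rw [hnsdef, Finset.mem_filter] at hc
          rcases hdich (F c) (hFE2 c) with h | h
          · exact absurd h hc.2
          · exact h
        have hclaim : ∀ s : Finset (Fin t),
            (∀ c ∈ s, rkS M (F c ∪ X i) = rkS N (F c) + (i-1)) →
            rkS M ((⋃ c ∈ s, F c) ∪ X i) + s.card ≤ (∑ c ∈ s, rkS N (F c)) + i := by
          intro s
          induction s using Finset.induction_on with
          | empty =>
            intro _
            simp only [Finset.sum_empty, Finset.card_empty, add_zero, zero_add]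
            have : (⋃ c ∈ (∅ : Finset (Fin t)), F c) ∪ X i = X i := by simp
            rw [this, hrk]
          | insert a s' hnm ih =>
            intro hall
            have hFa : rkS M (F a ∪ X i) = rkS N (F a) + (i-1) :=
              hall a (Finset.mem_insert_self a s')
            have halls : ∀ c ∈ s', rkS M (F c ∪ X i) = rkS N (F c) + (i-1) :=
              fun c hc => hall c (Finset.mem_insert_of_mem hc)
            have hUE' : (⋃ c ∈ s', F c) ⊆ M.E := by
              intro x hx
              obtain ⟨c, _, hxc⟩ := mem_iUnion₂.mp hx
              exact hFE2 c hxc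
            have hFaE : F a ∪ X i ⊆ M.E := union_subset (hFE2 a) hXiE
            have hUE : (⋃ c ∈ s', F c) ∪ X i ⊆ M.E := union_subset hUE' hXiE
            have hAE : M.closure (F a ∪ X i) ⊆ M.E := M.closure_subset_ground _
            have hBE : M.closure ((⋃ c ∈ s', F c) ∪ X i) ⊆ M.E := M.closure_subset_ground _
            have hsm := rkS_submod hME (M.closure (F a ∪ X i))
              (M.closure ((⋃ c ∈ s', F c) ∪ X i)) hAE hBE
            have hrA : rkS M (M.closure (F a ∪ X i)) = rkS N (F a) + (i-1) := by
              rw [rkS_closure hME _ hFaE, hFa]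
            have hrB : rkS M (M.closure ((⋃ c ∈ s', F c) ∪ X i))
                = rkS M ((⋃ c ∈ s', F c) ∪ X i) := rkS_closure hME _ hUE
            have hXiAB : X i ⊆ M.closure (F a ∪ X i) ∩ M.closure ((⋃ c ∈ s', F c) ∪ X i) :=
              subset_inter
                (subset_union_right.trans (M.subset_closure _ hFaE))
                (subset_union_right.trans (M.subset_closure _ hUE))
            have hiAB : i ≤ rkS M (M.closure (F a ∪ X i) ∩ M.closure ((⋃ c ∈ s', F c) ∪ X i)) := by
              have h := rkS_mono hME hXiAB
              rwa [hrk] at h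
            have hsubU : (⋃ c ∈ insert a s', F c) ∪ X i ⊆
                M.closure (F a ∪ X i) ∪ M.closure ((⋃ c ∈ s', F c) ∪ X i) := by
              rw [Finset.set_biUnion_insert]
              rintro x ((hx | hx) | hx)
              · exact Or.inl (M.subset_closure _ hFaE (Or.inl hx))
              · exact Or.inr (M.subset_closure _ hUE (Or.inl hx))
              · exact Or.inl (M.subset_closure _ hFaE (Or.inr hx))
            have hle1 : rkS M ((⋃ c ∈ insert a s', F c) ∪ X i) ≤
                rkS M (M.closure (F a ∪ X i) ∪ M.closure ((⋃ c ∈ s', F c) ∪ X i)) :=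
              rkS_mono hME hsubU
            have hihs := ih halls
            rw [Finset.sum_insert hnm, Finset.card_insert_of_notMem hnm]
            omega
        have hUnsE : (⋃ c ∈ ns, F c) ⊆ M.E := by
          intro x hx
          obtain ⟨c, _, hxc⟩ := mem_iUnion₂.mp hx
          exact hFE2 c hxc
        have hUXiE : (⋃ c ∈ ns, F c) ∪ X i ⊆ M.E := union_subset hUnsE hXiE
        apply degen_of_finset
          (insert (M.closure ((⋃ c ∈ ns, F c) ∪ X i) ∩ (Y ∪ X i))
            (sk.image (fun c => M.closure (F c) ∩ (Y ∪ X i))))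
        · intro A hA
          rcases Finset.mem_insert.mp hA with rfl | hA
          · refine ⟨flat_restrict_inter hRE (flat_closure M _), ?_⟩
            rw [rkS_restrict' _ inter_subset_right]
            have h2 : rkS M (X i) ≤ rkS M (M.closure ((⋃ c ∈ ns, F c) ∪ X i) ∩ (Y ∪ X i)) :=
              rkS_mono hME (subset_inter
                (subset_union_right.trans (M.subset_closure _ hUXiE)) hXiR)
            rw [hrk] at h2
            omega
          · obtain ⟨c, hc, rfl⟩ := Finset.mem_image.mp hA
            rw [hskdef, Finset.mem_filter] at hc
            refine ⟨flat_restrict_inter hRE (flat_closure M _), ?_⟩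
            rw [rkS_restrict' _ inter_subset_right]
            have h2 : rkS M (F c) ≤ rkS M (M.closure (F c) ∩ (Y ∪ X i)) :=
              rkS_mono hME (subset_inter (M.subset_closure _ (hFE2 c))
                ((hFY c).trans subset_union_left))
            have h3 := hr2 c
            omega
        · intro x hx
          have hx' : x ∈ Y ∪ X i := hx
          rcases hx' with hxY | hxXi
          · have hxQ : x ∈ ⋃ c, F c := hcov (show x ∈ ((N ↾ (M.E \ X i)) ↾ Y).E from hxY)
            obtain ⟨c, hxc⟩ := mem_iUnion.mp hxQ
            by_cases hcs : rkS M (F c) = rkS N (F c)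
            · refine mem_iUnion₂.mpr ⟨M.closure (F c) ∩ (Y ∪ X i), ?_, ?_⟩
              · exact Finset.mem_insert_of_mem (Finset.mem_image_of_mem _
                  (Finset.mem_filter.mpr ⟨Finset.mem_univ c, hcs⟩))
              · exact ⟨M.subset_closure _ (hFE2 c) hxc, Or.inl hxY⟩
            · refine mem_iUnion₂.mpr ⟨_, Finset.mem_insert_self _ _, ?_, Or.inl hxY⟩
              refine M.subset_closure _ hUXiE (Or.inl ?_)
              exact mem_iUnion₂.mpr ⟨c, Finset.mem_filter.mpr ⟨Finset.mem_univ c, hcs⟩, hxc⟩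
          · exact mem_iUnion₂.mpr ⟨_, Finset.mem_insert_self _ _,
              ⟨M.subset_closure _ hUXiE (Or.inr hxXi), Or.inr hxXi⟩⟩
        · have hs1 := sum_insert_le_nat
            (sk.image (fun c => M.closure (F c) ∩ (Y ∪ X i)))
            (M.closure ((⋃ c ∈ ns, F c) ∪ X i) ∩ (Y ∪ X i))
            (fun A => rkS (M ↾ (Y ∪ X i)) A - 1)
          have hs2 : ∑ A ∈ sk.image (fun c => M.closure (F c) ∩ (Y ∪ X i)),
              (rkS (M ↾ (Y ∪ X i)) A - 1) ≤ ∑ c ∈ sk, (rkS N (F c) - 1) := by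
            refine (sum_image_le_nat sk _ _).trans (Finset.sum_le_sum ?_)
            intro c hc
            rw [hskdef, Finset.mem_filter] at hc
            have h1 : rkS (M ↾ (Y ∪ X i)) (M.closure (F c) ∩ (Y ∪ X i))
                = rkS M (M.closure (F c) ∩ (Y ∪ X i)) := rkS_restrict' M inter_subset_right
            have h2 : rkS M (M.closure (F c) ∩ (Y ∪ X i)) ≤ rkS M (M.closure (F c)) :=
              rkS_mono hME inter_subset_left
            have h3 : rkS M (M.closure (F c)) = rkS M (F c) := rkS_closure hME _ (hFE2 c)
            omega
          have hp0 : rkS (M ↾ (Y ∪ X i)) (M.closure ((⋃ c ∈ ns, F c) ∪ X i) ∩ (Y ∪ X i))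
              + ns.card ≤ (∑ c ∈ ns, rkS N (F c)) + i := by
            have h1 : rkS (M ↾ (Y ∪ X i)) (M.closure ((⋃ c ∈ ns, F c) ∪ X i) ∩ (Y ∪ X i))
                = rkS M (M.closure ((⋃ c ∈ ns, F c) ∪ X i) ∩ (Y ∪ X i)) :=
              rkS_restrict' M inter_subset_right
            have h2 : rkS M (M.closure ((⋃ c ∈ ns, F c) ∪ X i) ∩ (Y ∪ X i))
                ≤ rkS M (M.closure ((⋃ c ∈ ns, F c) ∪ X i)) := rkS_mono hME inter_subset_left
            have h3 : rkS M (M.closure ((⋃ c ∈ ns, F c) ∪ X i))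
                = rkS M ((⋃ c ∈ ns, F c) ∪ X i) := rkS_closure hME _ hUXiE
            have h4 := hclaim ns hnsprop
            omega
          have hnssum : ∑ c ∈ ns, rkS N (F c) = (∑ c ∈ ns, (rkS N (F c) - 1)) + ns.card := by
            rw [Finset.sum_congr rfl
              (fun c (hc : c ∈ ns) => (by have := hr2 c; omega :
                rkS N (F c) = rkS N (F c) - 1 + 1)),
              Finset.sum_add_distrib, Finset.sum_const, smul_eq_mul, mul_one]
          have hsplit : (∑ c ∈ sk, (rkS N (F c) - 1)) + (∑ c ∈ ns, (rkS N (F c) - 1))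
              = ∑ c, (rkS N (F c) - 1) :=
            Finset.sum_filter_add_sum_filter_not Finset.univ _ _
          have htot : ∑ c, (rkS N (F c) - 1) ≤ l - i := by
            have h5 : ∑ c, (rkS ((N ↾ (M.E \ X i)) ↾ Y) (F c) - 1)
                = ∑ c, (rkS N (F c) - 1) :=
              Finset.sum_congr rfl (fun c _ => by rw [hrQ c])
            rw [h5] at hsum
            omega
          omega
    have hRX : Y ∪ X i ⊆ X (l+1) := union_subset (hYsub.trans diff_subset) hXiXl1
    have hcard := hopt l (by omega) hlk (Y ∪ X i) hRX hstep1
    have hdisj : Disjoint Y (X i) := disjoint_left.mpr (fun x hx => (hYE' hx).2)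
    have hUcard : (Y ∪ X i).ncard = Y.ncard + (X i).ncard := ncard_union_eq hdisj hYfin hXifin
    have hdiffcard : (X l \ X i).ncard = (X l).ncard - (X i).ncard := ncard_diff hXil hXifin
    have hle' : (X i).ncard ≤ (X l).ncard := ncard_le_ncard hXil hXlfin
    omega



end MatroidPaper
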